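/- Let U be an open subset of a finite-dimensional real vector space E, g̃ a smooth assignment of a symmetric bilinear form g̃_p on E to each p ∈ U, Ω : U → ℝ a smooth function, and define the conformally rescaled metric g_p := Ω(p)²·g̃_p. Then the Koszul forms K of g and K̃ of g̃ are related, for all smooth vector fields X, Y, Z : U → E, by K(X,Y,Z) = Ω²·K̃(X,Y,Z) + Ω·( g̃(Y,Z)·X(Ω) + g̃(X,Z)·Y(Ω) − g̃(X,Y)·Z(Ω) ). -/

import Mathlib

variable {E : Type*} [NormedAddCommGroup E] [NormedSpace ℝ E] [FiniteDimensional ℝ E]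

/-- The action `(Xf)(p) = df_p(X(p))` of a vector field on a function. -/
noncomputable def vAct (X : E → E) (f : E → ℝ) : E → ℝ := fun p => fderiv ℝ f p (X p)

/-- The Lie bracket `[X,Y](p) = dY_p(X(p)) − dX_p(Y(p))` of vector fields. -/
noncomputable def vBracket (X Y : E → E) : E → E :=
  fun p => fderiv ℝ Y p (X p) - fderiv ℝ X p (Y p)

/-- The function `p ↦ g_p(Y(p), Z(p))`. -/
noncomputable def gFun (g : E → E →L[ℝ] E →L[ℝ] ℝ) (Y Z : E → E) : E → ℝ := fun p => g p (Y p) (Z p)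

/-- The Koszul form
`K(X,Y,Z) := ½{X g(Y,Z) + Y g(Z,X) − Z g(X,Y) − g(X,[Y,Z]) + g(Y,[Z,X]) + g(Z,[X,Y])}`. -/
noncomputable def koszul (g : E → E →L[ℝ] E →L[ℝ] ℝ) (X Y Z : E → E) : E → ℝ := fun p =>
  (1/2 : ℝ) * (vAct X (gFun g Y Z) p + vAct Y (gFun g Z X) p - vAct Z (gFun g X Y) p
    - gFun g X (vBracket Y Z) p + gFun g Y (vBracket Z X) p + gFun g Z (vBracket X Y) p)


set_option linter.unusedSectionVars false in
lemma vAct_smul_gFun (W A B : E → E) (Ω : E → ℝ) (gt : E → E →L[ℝ] E →L[ℝ] ℝ)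
    (p : E) (hΩ : DifferentiableAt ℝ Ω p) (hgt : DifferentiableAt ℝ gt p)
    (hA : DifferentiableAt ℝ A p) (hB : DifferentiableAt ℝ B p) :
    vAct W (gFun (fun q => Ω q ^ 2 • gt q) A B) p
      = Ω p ^ 2 * vAct W (gFun gt A B) p + 2 * Ω p * vAct W Ω p * gt p (A p) (B p) := by
  have hh : DifferentiableAt ℝ (fun q => gt q (A q) (B q)) p :=
    (hgt.clm_apply hA).clm_apply hB
  have hΩ2 : DifferentiableAt ℝ (fun q => Ω q ^ 2) p := hΩ.pow 2
  have hEq : (gFun (fun q => Ω q ^ 2 • gt q) A B) = fun q => Ω q ^ 2 * gt q (A q) (B q) := by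
    funext q; simp [gFun]
  have hd : fderiv ℝ (fun q => Ω q ^ 2) p = (2 * Ω p) • fderiv ℝ Ω p := by
    have : (fun q => Ω q ^ 2) = fun q => Ω q * Ω q := by funext q; ring
    rw [this, fderiv_fun_mul hΩ hΩ]
    ext v
    simp
    ring
  rw [vAct, hEq, fderiv_fun_mul hΩ2 hh, hd]
  have hG : fderiv ℝ (gFun gt A B) p = fderiv ℝ (fun q => gt q (A q) (B q)) p := rfl
  simp only [vAct, hG, ContinuousLinearMap.add_apply, ContinuousLinearMap.smul_apply,
    smul_eq_mul]
  ring

/-- for the conformally rescaled (possibly degenerate) metric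
`g := Ω² g̃`, the Koszul forms are related by
`K(X,Y,Z) = Ω²·K̃(X,Y,Z) + Ω·(g̃(Y,Z)·X(Ω) + g̃(X,Z)·Y(Ω) − g̃(X,Y)·Z(Ω))` on `U`. -/
theorem koszul_conformal
    (U : Set E) (hU : IsOpen U)
    (gt : E → E →L[ℝ] E →L[ℝ] ℝ) (hgt : ContDiffOn ℝ (⊤ : ℕ∞) gt U)
    (hsymm : ∀ p : E, ∀ u v : E, gt p u v = gt p v u)
    (Ω : E → ℝ) (hΩ : ContDiffOn ℝ (⊤ : ℕ∞) Ω U)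
    (X Y Z : E → E) (hX : ContDiffOn ℝ (⊤ : ℕ∞) X U) (hY : ContDiffOn ℝ (⊤ : ℕ∞) Y U)
    (hZ : ContDiffOn ℝ (⊤ : ℕ∞) Z U) :
    ∀ p ∈ U,
      koszul (fun q => Ω q ^ 2 • gt q) X Y Z p =
        Ω p ^ 2 * koszul gt X Y Z p +
          Ω p * (gt p (Y p) (Z p) * vAct X Ω p + gt p (X p) (Z p) * vAct Y Ω p
            - gt p (X p) (Y p) * vAct Z Ω p) := by

  intro p hp
  have hmem := hU.mem_nhds hp
  have hΩd : DifferentiableAt ℝ Ω p :=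
    (hΩ.contDiffAt hmem).differentiableAt (by simp)
  have hgtd : DifferentiableAt ℝ gt p :=
    (hgt.contDiffAt hmem).differentiableAt (by simp)
  have hXd : DifferentiableAt ℝ X p := (hX.contDiffAt hmem).differentiableAt (by simp)
  have hYd : DifferentiableAt ℝ Y p := (hY.contDiffAt hmem).differentiableAt (by simp)
  have hZd : DifferentiableAt ℝ Z p := (hZ.contDiffAt hmem).differentiableAt (by simp)
  have h1 := vAct_smul_gFun X Y Z Ω gt p hΩd hgtd hYd hZd
  have h2 := vAct_smul_gFun Y Z X Ω gt p hΩd hgtd hZd hXd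
  have h3 := vAct_smul_gFun Z X Y Ω gt p hΩd hgtd hXd hYd
  simp only [koszul, h1, h2, h3, gFun, ContinuousLinearMap.smul_apply, smul_eq_mul]
  have hs1 : gt p (Z p) (X p) = gt p (X p) (Z p) := hsymm p _ _
  rw [hs1]
  ring
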